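/- Let (Y, F) be a topological fractal and let Z be a finite union of continuous images of Y such that Y ∩ Z = ∅. Fix y₀ ∈ Y and z₀ ∈ Z. Extending each f ∈ F to Y ∪ Z by setting it equal to y₀ on Z, and extending each surjection p: Y → (piece of Z) to Y ∪ Z by setting it equal to z₀ on Z, yields a family F' ∪ P' making (Y ∪ Z, F' ∪ P') a topological fractal. -/

import Mathlib

open Set

/-- Composition of a list of self-maps. -/
def Comp {X : Type*} (l : List (X → X)) : X → X := l.foldr (· ∘ ·) id

/-- `F` is a topologically contracting system on `Y ⊆ X`. -/
def TopContracting {X : Type*} [TopologicalSpace X] (F : Set (X → X)) (Y : Set X) : Prop :=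
  ∀ 𝒰 : Set (Set X), (∀ U ∈ 𝒰, IsOpen U) → Y ⊆ ⋃₀ 𝒰 →
    ∃ n : ℕ, ∀ l : List (X → X), l.length = n → (∀ f ∈ l, f ∈ F) →
      ∃ U ∈ 𝒰, Comp l '' Y ⊆ U

/-- `(Y, F)` is a topological fractal, where `Y` is a compact subset of an ambient space. -/
def TopFractalOn {X : Type*} [TopologicalSpace X] (F : Set (X → X)) (Y : Set X) : Prop :=
  IsCompact Y ∧ F.Finite ∧ (∀ f ∈ F, ContinuousOn f Y ∧ f '' Y ⊆ Y) ∧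
    (⋃ f ∈ F, f '' Y) = Y ∧ TopContracting F Y

lemma comp_cons {X : Type*} (g : X → X) (t : List (X → X)) : Comp (g :: t) = g ∘ Comp t := rfl

lemma comp_append {X : Type*} (a b : List (X → X)) : Comp (a ++ b) = Comp a ∘ Comp b := by
  induction a with
  | nil => rfl
  | cons g t ih =>
    show g ∘ Comp (t ++ b) = (g ∘ Comp t) ∘ Comp b
    rw [ih]
    rfl

open scoped Classical in
theorem stmt6 {W : Type*} [TopologicalSpace W] [T2Space W] (Y Z : Set W)
    (F P : Set (W → W)) (hYF : TopFractalOn F Y)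
    (hP : P.Finite) (hPcont : ∀ p ∈ P, ContinuousOn p Y)
    (hPZ : (⋃ p ∈ P, p '' Y) = Z)
    (hYZ : Y ∩ Z = ∅) (hcomp : IsCompact (Y ∪ Z))
    (y₀ : W) (hy₀ : y₀ ∈ Y) (z₀ : W) (hz₀ : z₀ ∈ Z) :
    TopFractalOn
      ({g | ∃ f ∈ F, g = fun x => if x ∈ Y then f x else y₀} ∪
       {g | ∃ p ∈ P, g = fun x => if x ∈ Y then p x else z₀})
      (Y ∪ Z) := by
  obtain ⟨hYcomp, hFfin, hFmap, hFun, hFcontr⟩ := hYF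
  set F' : Set (W → W) := {g | ∃ f ∈ F, g = fun x => if x ∈ Y then f x else y₀} with hF'def
  set P' : Set (W → W) := {g | ∃ p ∈ P, g = fun x => if x ∈ Y then p x else z₀} with hP'def
  have hdisj : ∀ x, x ∈ Z → x ∉ Y := by
    intro x hxZ hxY
    have hx : x ∈ Y ∩ Z := ⟨hxY, hxZ⟩
    rw [hYZ] at hx; exact hx
  have hfY : ∀ f ∈ F, ∀ x ∈ Y, f x ∈ Y := fun f hf x hx => (hFmap f hf).2 ⟨x, hx, rfl⟩
  have hpZ : ∀ p ∈ P, ∀ x ∈ Y, p x ∈ Z := by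
    intro p hp x hx
    rw [← hPZ]; exact mem_biUnion hp ⟨x, hx, rfl⟩
  have hF'pt : ∀ g ∈ F', ∀ x : W, g x ∈ Y := by
    rintro g ⟨f, hf, rfl⟩ x
    by_cases hx : x ∈ Y
    · simp only [hx, if_true]; exact hfY f hf x hx
    · simp only [hx, if_false]; exact hy₀
  have hP'pt : ∀ g ∈ P', ∀ x : W, g x ∈ Z := by
    rintro g ⟨p, hp, rfl⟩ x
    by_cases hx : x ∈ Y
    · simp only [hx, if_true]; exact hpZ p hp x hx
    · simp only [hx, if_false]; exact hz₀
  have hGpt : ∀ g ∈ F' ∪ P', ∀ x : W, g x ∈ Y ∪ Z := by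
    rintro g (hg | hg) x
    · exact Or.inl (hF'pt g hg x)
    · exact Or.inr (hP'pt g hg x)
  have hZcomp : IsCompact Z := by
    rw [← hPZ]
    exact hP.isCompact_biUnion (fun p hp => hYcomp.image_of_continuousOn (hPcont p hp))
  have hYcl : IsClosed Y := hYcomp.isClosed
  have hZcl : IsClosed Z := hZcomp.isClosed
  have hcont : ∀ g ∈ F' ∪ P', ContinuousOn g (Y ∪ Z) := by
    intro g hg x hx
    have hY1 : ContinuousWithinAt g Y x := by
      by_cases hxY : x ∈ Y
      · rcases hg with ⟨f, hf, rfl⟩ | ⟨p, hp, rfl⟩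
        · exact ((hFmap f hf).1 x hxY).congr (fun y hy => by simp [hy]) (by simp [hxY])
        · exact ((hPcont p hp) x hxY).congr (fun y hy => by simp [hy]) (by simp [hxY])
      · exact continuousWithinAt_of_notMem_closure (by rwa [hYcl.closure_eq])
    have hZ1 : ContinuousWithinAt g Z x := by
      by_cases hxZ : x ∈ Z
      · rcases hg with ⟨f, hf, rfl⟩ | ⟨p, hp, rfl⟩
        · exact (continuousWithinAt_const (b := y₀)).congr
            (fun y hy => by simp [hdisj y hy]) (by simp [hdisj x hxZ])
        · exact (continuousWithinAt_const (b := z₀)).congr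
            (fun y hy => by simp [hdisj y hy]) (by simp [hdisj x hxZ])
      · exact continuousWithinAt_of_notMem_closure (by rwa [hZcl.closure_eq])
    exact hY1.union hZ1
  have hmaps : ∀ g ∈ F' ∪ P', g '' (Y ∪ Z) ⊆ Y ∪ Z := by
    rintro g hg _ ⟨x, hx, rfl⟩; exact hGpt g hg x
  have hfin : (F' ∪ P').Finite := by
    apply Set.Finite.union
    · apply (hFfin.image (fun f => fun x => if x ∈ Y then f x else y₀)).subset
      rintro g ⟨f, hf, rfl⟩; exact mem_image_of_mem _ hf
    · apply (hP.image (fun p => fun x => if x ∈ Y then p x else z₀)).subset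
      rintro g ⟨p, hp, rfl⟩; exact mem_image_of_mem _ hp
  have hunion : (⋃ g ∈ F' ∪ P', g '' (Y ∪ Z)) = Y ∪ Z := by
    apply Subset.antisymm
    · exact iUnion₂_subset fun g hg => hmaps g hg
    · rintro x (hxY | hxZ)
      · rw [← hFun] at hxY
        simp only [mem_iUnion, mem_image] at hxY
        obtain ⟨f, hf, y, hy, hxy⟩ := hxY
        exact mem_biUnion (Or.inl ⟨f, hf, rfl⟩) ⟨y, Or.inl hy, by simp [hy, hxy]⟩
      · rw [← hPZ] at hxZ
        simp only [mem_iUnion, mem_image] at hxZ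
        obtain ⟨p, hp, y, hy, hxy⟩ := hxZ
        exact mem_biUnion (Or.inr ⟨p, hp, rfl⟩) ⟨y, Or.inl hy, by simp [hy, hxy]⟩
  -- auxiliary composition facts
  have hFYcomp : ∀ l : List (W → W), (∀ f ∈ l, f ∈ F) → ∀ x ∈ Y, Comp l x ∈ Y := by
    intro l
    induction l with
    | nil => intro _ x hx; exact hx
    | cons f t ih =>
      intro h x hx
      exact hfY f (h f (List.mem_cons_self)) _
        (ih (fun g hg => h g (List.mem_cons_of_mem _ hg)) x hx)
  have hExt : ∀ l : List (W → W), (∀ g ∈ l, g ∈ F') →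
      ∃ l' : List (W → W), l'.length = l.length ∧ (∀ f ∈ l', f ∈ F) ∧
        ∀ x ∈ Y, Comp l x = Comp l' x := by
    intro l
    induction l with
    | nil => exact fun _ => ⟨[], rfl, by simp, fun x _ => rfl⟩
    | cons g t ih =>
      intro h
      obtain ⟨f, hf, hg⟩ := h g (List.mem_cons_self)
      obtain ⟨t', hlen, ht'F, ht'⟩ := ih (fun a ha => h a (List.mem_cons_of_mem _ ha))
      refine ⟨f :: t', by simp [hlen], ?_, ?_⟩
      · intro a ha
        rcases List.mem_cons.mp ha with rfl | ha
        · exact hf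
        · exact ht'F a ha
      · intro x hx
        have h1 : Comp t x = Comp t' x := ht' x hx
        have h2 : Comp t' x ∈ Y := hFYcomp t' ht'F x hx
        calc Comp (g :: t) x = g (Comp t x) := rfl
          _ = g (Comp t' x) := by rw [h1]
          _ = f (Comp t' x) := by rw [hg]; simp [h2]
          _ = Comp (f :: t') x := rfl
  have hSingZ : ∀ l : List (W → W), (∀ g ∈ l, g ∈ F' ∪ P') → l ≠ [] →
      ∃ c ∈ Y ∪ Z, ∀ z ∈ Z, Comp l z = c := by
    intro l
    induction l with
    | nil => intro _ h; exact absurd rfl h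
    | cons g t ih =>
      intro h _
      rcases eq_or_ne t [] with rfl | ht
      · rcases h g (List.mem_cons_self) with ⟨f, hf, rfl⟩ | ⟨p, hp, rfl⟩
        · exact ⟨y₀, Or.inl hy₀, fun z hz => by simp [Comp, hdisj z hz]⟩
        · exact ⟨z₀, Or.inr hz₀, fun z hz => by simp [Comp, hdisj z hz]⟩
      · obtain ⟨c, hc, hcz⟩ := ih (fun a ha => h a (List.mem_cons_of_mem _ ha)) ht
        refine ⟨g c, hGpt g (h g (List.mem_cons_self)) c, fun z hz => ?_⟩
        have h1 : Comp (g :: t) z = g (Comp t z) := rfl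
        rw [h1, hcz z hz]
  have hF'ne : ∀ l : List (W → W), (∀ g ∈ l, g ∈ F') → l ≠ [] → ∀ x : W, Comp l x ∈ Y := by
    intro l hl hne x
    cases l with
    | nil => exact absurd rfl hne
    | cons g t => exact hF'pt g (hl g (List.mem_cons_self)) (Comp t x)
  -- the contraction property
  have hcontr : TopContracting (F' ∪ P') (Y ∪ Z) := by
    intro 𝒰 h𝒰 hcov
    set 𝒲 : Set (Set W) :=
      {S | IsOpen S ∧ (∃ U ∈ 𝒰, S ⊆ U) ∧ ∀ p ∈ P, ∃ U ∈ 𝒰, p '' (S ∩ Y) ⊆ U} with h𝒲def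
    have h𝒲open : ∀ S ∈ 𝒲, IsOpen S := fun S hS => hS.1
    have h𝒲cov : Y ⊆ ⋃₀ 𝒲 := by
      intro y hy
      obtain ⟨U₀, hU₀, hyU₀⟩ := hcov (Or.inl hy)
      have hV : ∀ p : W → W, ∃ V : Set W, IsOpen V ∧ y ∈ V ∧
          (p ∈ P → ∃ U ∈ 𝒰, p '' (V ∩ Y) ⊆ U) := by
        intro p
        by_cases hp : p ∈ P
        · obtain ⟨U, hU, hpyU⟩ := hcov (Or.inr (hpZ p hp y hy))
          have hpc : ContinuousWithinAt p Y y := hPcont p hp y hy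
          have hmem : p ⁻¹' U ∈ nhdsWithin y Y := hpc ((h𝒰 U hU).mem_nhds hpyU)
          rw [mem_nhdsWithin] at hmem
          obtain ⟨V, hVo, hyV, hVsub⟩ := hmem
          refine ⟨V, hVo, hyV, fun _ => ⟨U, hU, ?_⟩⟩
          rintro _ ⟨x, hx, rfl⟩
          exact hVsub hx
        · exact ⟨univ, isOpen_univ, mem_univ y, fun h => absurd h hp⟩
      choose V hVo hVy hVU using hV
      refine ⟨U₀ ∩ ⋂ p ∈ P, V p, ⟨?_, ⟨U₀, hU₀, inter_subset_left⟩, ?_⟩,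
        hyU₀, mem_biInter fun p _ => hVy p⟩
      · exact (h𝒰 U₀ hU₀).inter (hP.isOpen_biInter fun p _ => hVo p)
      · intro p hp
        obtain ⟨U, hU, hUsub⟩ := hVU p hp
        refine ⟨U, hU, ?_⟩
        refine (image_mono (f := p) ?_).trans hUsub
        exact inter_subset_inter_left Y (inter_subset_right.trans (biInter_subset_of_mem hp))
    obtain ⟨m, hm⟩ := hFcontr 𝒲 h𝒲open h𝒲cov
    refine ⟨m + 2, ?_⟩
    intro l hlen hmem
    -- key: an all-F' list of length m+1 lands inside S ∩ Y for some S ∈ 𝒲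
    have key : ∀ b : List (W → W), (∀ g ∈ b, g ∈ F') → b.length = m + 1 →
        ∃ S ∈ 𝒲, ∀ x : W, Comp b x ∈ S ∩ Y := by
      intro b hb hblen
      have hulen : (b.take m).length = m := by
        rw [List.length_take, hblen]; omega
      have hvne : b.drop m ≠ [] := by
        have hvl : (b.drop m).length = 1 := by rw [List.length_drop, hblen]; omega
        intro hnil; rw [hnil] at hvl; simp at hvl
      obtain ⟨u', hu'len, hu'F, hu'⟩ := hExt (b.take m) (fun g hg => hb g (List.take_subset m b hg))
      obtain ⟨S, hS, hSsub⟩ := hm u' (hu'len.trans hulen) hu'F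
      refine ⟨S, hS, fun x => ?_⟩
      have hx1 : Comp (b.drop m) x ∈ Y :=
        hF'ne (b.drop m) (fun g hg => hb g (List.drop_subset m b hg)) hvne x
      have hsplit : Comp b x = Comp (b.take m) (Comp (b.drop m) x) := by
        conv_lhs => rw [← List.take_append_drop m b]
        rw [comp_append]; rfl
      rw [hsplit, hu' _ hx1]
      exact ⟨hSsub ⟨_, hx1, rfl⟩, hFYcomp u' hu'F _ hx1⟩
    -- singleton collapse case
    have sing : ∀ (a b : List (W → W)) (q : W → W), l = a ++ q :: b → a ≠ [] → q ∈ P' →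
        ∃ U ∈ 𝒰, Comp l '' (Y ∪ Z) ⊆ U := by
      intro a b q hl hane hq
      have haG : ∀ g ∈ a, g ∈ F' ∪ P' := fun g hg => hmem g (hl ▸ List.mem_append_left _ hg)
      obtain ⟨c, hc, hcz⟩ := hSingZ a haG hane
      obtain ⟨U, hU, hcU⟩ := hcov hc
      refine ⟨U, hU, ?_⟩
      rintro _ ⟨x, hx, rfl⟩
      have h1 : Comp l x = Comp a (Comp (q :: b) x) := by
        rw [hl, comp_append]; rfl
      have h2 : Comp (q :: b) x ∈ Z := hP'pt q hq (Comp b x)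
      rw [h1, hcz _ h2]
      exact hcU
    by_cases hall : ∀ g ∈ l, g ∈ F'
    · obtain ⟨S, hS𝒲, hSkey⟩ := key (l.take (m + 1))
        (fun g hg => hall g (List.take_subset _ _ hg))
        (by rw [List.length_take, hlen]; omega)
      obtain ⟨hSo, ⟨U, hU, hSU⟩, -⟩ := hS𝒲
      refine ⟨U, hU, ?_⟩
      rintro _ ⟨x, hx, rfl⟩
      have hsplit : Comp l x = Comp (l.take (m + 1)) (Comp (l.drop (m + 1)) x) := by
        conv_lhs => rw [← List.take_append_drop (m + 1) l]
        rw [comp_append]; rfl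
      rw [hsplit]
      exact hSU (hSkey _).1
    · push_neg at hall
      obtain ⟨q, hql, hqF⟩ := hall
      have hqP : q ∈ P' := by
        rcases hmem q hql with h | h
        · exact absurd h hqF
        · exact h
      obtain ⟨a, b, hl⟩ := List.append_of_mem hql
      rcases eq_or_ne a [] with rfl | hane
      · simp only [List.nil_append] at hl
        by_cases hbF : ∀ g ∈ b, g ∈ F'
        · have hblen : b.length = m + 1 := by
            have h := hlen; rw [hl] at h; simpa using h
          obtain ⟨S, hS𝒲, hSkey⟩ := key b hbF hblen
          obtain ⟨p, hp, hqp⟩ := hqP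
          obtain ⟨U, hU, hpU⟩ := hS𝒲.2.2 p hp
          refine ⟨U, hU, ?_⟩
          rintro _ ⟨x, hx, rfl⟩
          have h1 : Comp l x = q (Comp b x) := by rw [hl]; rfl
          have h2 := hSkey x
          rw [h1, hqp]
          show (if Comp b x ∈ Y then p (Comp b x) else z₀) ∈ U
          rw [if_pos h2.2]
          exact hpU ⟨Comp b x, h2, rfl⟩
        · push_neg at hbF
          obtain ⟨r, hrb, hrF⟩ := hbF
          have hrP : r ∈ P' := by
            rcases hmem r (hl ▸ List.mem_cons_of_mem q hrb) with h | h
            · exact absurd h hrF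
            · exact h
          obtain ⟨a₂, b₂, hb⟩ := List.append_of_mem hrb
          exact sing (q :: a₂) b₂ r (by rw [hl, hb, List.cons_append]) (by simp) hrP
      · exact sing a b q hl hane hqP
  exact ⟨hcomp, hfin, fun g hg => ⟨hcont g hg, hmaps g hg⟩, hunion, hcontr⟩
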